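/- Let Γ be a group with finitely many conjugacy classes of finite subgroups (H₁), …, (H_r). The global L²-character map ch ⊗ ℚ : A(Γ) ⊗ ℚ → ℚ^r, sending [Γ/H] to (ch_{H₁}(Γ/H), …, ch_{H_r}(Γ/H)) where ch_K(Γ/H) = Σ_{(L) ≤ H, L ∼_Γ K} |K|/|H ∩ N_Γ(L)|, is a ℚ-linear isomorphism. -/
import Mathlib


/-- The `H`-conjugation setoid on the set of subgroups `L ≤ H` which are conjugate in `Γ`
to `K`. -/
def subconjSetoid (Γ : Type) [Group Γ] (K H : Subgroup Γ) :
    Setoid {L : Subgroup Γ // L ≤ H ∧ ∃ g : Γ, K.map (MulAut.conj g).toMonoidHom = L} where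
  r L₁ L₂ := ∃ h ∈ H, L₁.1.map (MulAut.conj h).toMonoidHom = L₂.1
  iseqv := by
    have hconj : ∀ h h' : Γ, (MulAut.conj h').toMonoidHom.comp (MulAut.conj h).toMonoidHom =
        (MulAut.conj (h' * h)).toMonoidHom := by
      intro h h'; ext x; simp [MulAut.conj]; group
    have hone : (MulAut.conj (1 : Γ)).toMonoidHom = MonoidHom.id Γ := by
      ext x; simp [MulAut.conj]
    constructor
    · intro L
      exact ⟨1, H.one_mem, by rw [hone, Subgroup.map_id]⟩
    · rintro ⟨L₁, hL₁⟩ ⟨L₂, hL₂⟩ ⟨h, hh, hmap⟩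
      refine ⟨h⁻¹, H.inv_mem hh, ?_⟩
      rw [← hmap, Subgroup.map_map, hconj, inv_mul_cancel, hone, Subgroup.map_id]
    · rintro ⟨L₁, hL₁⟩ ⟨L₂, hL₂⟩ ⟨L₃, hL₃⟩ ⟨h, hh, hmap⟩ ⟨h', hh', hmap'⟩
      refine ⟨h' * h, H.mul_mem hh' hh, ?_⟩
      rw [← hmap', ← hmap, Subgroup.map_map, hconj]

/-- The `L²`-character `ch_K(Γ/H) = Σ_{(L)} |K| / |H ∩ N_Γ(L)|`, summed over the
`H`-conjugacy classes `(L)` of subgroups `L ≤ H` that are `Γ`-conjugate to `K`. -/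
noncomputable def chK (Γ : Type) [Group Γ] (K H : Subgroup Γ) : ℚ :=
  ∑ᶠ q : Quotient (subconjSetoid Γ K H),
    (Nat.card ↥K : ℚ) / (Nat.card ↥(H ⊓ Subgroup.normalizer q.out.1) : ℚ)

/-- Let `Γ` be a group with finitely many conjugacy classes of finite subgroups, represented by
pairwise non-conjugate finite subgroups `H₁, …, H_r`.  The global `L²`-character map
`A(Γ) ⊗ ℚ → ℚʳ`, which in the basis `[Γ/H₁], …, [Γ/H_r]` of `A(Γ) ⊗ ℚ` is given by the matrix
`(ch_{H_k}(Γ/H_i))_{k,i}`, is a `ℚ`-linear isomorphism. -/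
lemma conj_card_aux {Γ : Type} [Group Γ] (K : Subgroup Γ) (g : Γ) :
    Nat.card ↥(K.map (MulAut.conj g).toMonoidHom) = Nat.card ↥K :=
  (Nat.card_congr (K.equivMapOfInjective _ (MulAut.conj g).injective).toEquiv).symm

lemma chK_eq_zero {Γ : Type} [Group Γ] (K H : Subgroup Γ)
    (h : ¬ ∃ g : Γ, K.map (MulAut.conj g).toMonoidHom ≤ H) : chK Γ K H = 0 := by
  have hT : IsEmpty {L : Subgroup Γ // L ≤ H ∧ ∃ g : Γ,
      K.map (MulAut.conj g).toMonoidHom = L} := by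
    constructor; rintro ⟨L, hLH, g, hg⟩; exact h ⟨g, hg ▸ hLH⟩
  have hQ : IsEmpty (Quotient (subconjSetoid Γ K H)) :=
    ⟨fun q => hT.elim q.out⟩
  exact finsum_of_isEmpty _

lemma chK_self {Γ : Type} [Group Γ] (K : Subgroup Γ) [Finite ↥K] : chK Γ K K = 1 := by
  have hall : ∀ x : {L : Subgroup Γ // L ≤ K ∧ ∃ g : Γ,
      K.map (MulAut.conj g).toMonoidHom = L}, x.1 = K := by
    rintro ⟨L, hLK, g, hg⟩
    exact Subgroup.eq_of_le_of_card_ge hLK (le_of_eq (hg ▸ conj_card_aux K g).symm)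
  have hone : (MulAut.conj (1 : Γ)).toMonoidHom = MonoidHom.id Γ := by
    ext x; simp [MulAut.conj]
  haveI : Unique {L : Subgroup Γ // L ≤ K ∧ ∃ g : Γ,
      K.map (MulAut.conj g).toMonoidHom = L} :=
    { default := ⟨K, le_rfl, 1, by rw [hone, Subgroup.map_id]⟩
      uniq := fun x => Subtype.ext (hall x) }
  haveI hsub : Subsingleton (Quotient (subconjSetoid Γ K K)) :=
    ⟨fun a b => by
      rw [← Quotient.out_eq a, ← Quotient.out_eq b, Unique.eq_default a.out,
        Unique.eq_default b.out]⟩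
  haveI : Unique (Quotient (subconjSetoid Γ K K)) :=
    uniqueOfSubsingleton (Quotient.mk _ default)
  rw [chK, finsum_unique]
  rw [hall _, inf_eq_left.mpr (Subgroup.le_normalizer)]
  have : (0 : ℚ) < (Nat.card ↥K : ℚ) := by
    exact_mod_cast Nat.card_pos
  field_simp

theorem stmt16 (Γ : Type) [Group Γ] (r : ℕ) (H : Fin r → Subgroup Γ)
    (hfin : ∀ i, Finite ↥(H i))
    (hcomplete : ∀ L : Subgroup Γ, Finite ↥L →
      ∃ i, ∃ g : Γ, L.map (MulAut.conj g).toMonoidHom = H i)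
    (hdist : ∀ i j, i ≠ j → ¬ ∃ g : Γ, (H i).map (MulAut.conj g).toMonoidHom = H j) :
    Function.Bijective
      (Matrix.toLin' (Matrix.of fun k i : Fin r => chK Γ (H k) (H i))) := by
  set M : Matrix (Fin r) (Fin r) ℚ :=
    Matrix.of fun k i : Fin r => chK Γ (H k) (H i) with hM
  -- off-diagonal structure
  have key : ∀ k i : Fin r, M k i ≠ 0 →
      Nat.card ↥(H k) ≤ Nat.card ↥(H i) ∧
        (Nat.card ↥(H k) = Nat.card ↥(H i) → k = i) := by
    intro k i hne
    have hsub : ∃ g : Γ, (H k).map (MulAut.conj g).toMonoidHom ≤ H i := by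
      by_contra hc
      exact hne (chK_eq_zero _ _ hc)
    obtain ⟨g, hg⟩ := hsub
    haveI := hfin i
    have hle : Nat.card ↥(H k) ≤ Nat.card ↥(H i) := by
      rw [← conj_card_aux (H k) g]
      exact Subgroup.card_le_of_le hg
    refine ⟨hle, fun hcard => ?_⟩
    by_contra hki
    refine hdist k i hki ⟨g, ?_⟩
    exact Subgroup.eq_of_le_of_card_ge hg
      (le_of_eq (by rw [conj_card_aux (H k) g, hcard]))
  -- sort by cardinality
  set w : Fin r → ℕ := fun i => Nat.card ↥(H i) with hw
  set σ : Equiv.Perm (Fin r) := Tuple.sort w with hσ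
  have hmono : Monotone (w ∘ σ) := Tuple.monotone_sort w
  have htri : (M.submatrix σ σ).BlockTriangular id := by
    intro i j hji
    simp only [Matrix.submatrix_apply]
    by_contra hne
    obtain ⟨hle, heq⟩ := key (σ i) (σ j) hne
    have h1 : w (σ j) ≤ w (σ i) := hmono (le_of_lt hji)
    have : σ i = σ j := heq (le_antisymm hle h1)
    exact absurd (σ.injective this) (ne_of_gt hji)
  have hdiag : ∀ i : Fin r, M i i = 1 := by
    intro i
    haveI := hfin i
    exact chK_self (H i)
  have hdet : M.det = 1 := by
    rw [← Matrix.det_submatrix_equiv_self σ M,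
      Matrix.det_of_upperTriangular htri]
    simp only [Matrix.submatrix_apply, hdiag]
    simp
  have hunit : IsUnit M.det := by rw [hdet]; exact isUnit_one
  have h1 : M * M⁻¹ = 1 := Matrix.mul_nonsing_inv M hunit
  have h2 : M⁻¹ * M = 1 := Matrix.nonsing_inv_mul M hunit
  exact (Matrix.toLin'OfInv h2 h1).bijective
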